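/- The k-algebra homomorphism from the group algebra k[ℤ^θ × ℤ^θ] to 𝒰(q), sending the basis element corresponding to the group element (a, b) ∈ ℤ^θ × ℤ^θ to K_1^{a_1}⋯K_θ^{a_θ}·L_1^{b_1}⋯L_θ^{b_θ} (negative exponents interpreted via K_i⁻ and L_i⁻), is injective and its image is U⁰(q); in particular U⁰(q) is isomorphic as a k-algebra to the group algebra of the free abelian group ℤ^{2θ}. -/

import Mathlib

/-- The generators `E_i, F_i, K_i, K_i⁻, L_i, L_i⁻` of the Drinfeld double `𝒰(q)`. -/
inductive UGen (θ : ℕ) : Type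
  | E : Fin θ → UGen θ
  | F : Fin θ → UGen θ
  | K : Fin θ → UGen θ
  | Kinv : Fin θ → UGen θ
  | L : Fin θ → UGen θ
  | Linv : Fin θ → UGen θ

/-- The toral generators, i.e. those among `K_i, K_i⁻, L_i, L_i⁻`. -/
def UGen.IsToral {θ : ℕ} : UGen θ → Prop
  | .E _ => False
  | .F _ => False
  | _ => True

variable (k : Type*) [Field k] {θ : ℕ}

/-- The image of a generator in the free algebra. -/
noncomputable def Ugen (g : UGen θ) : FreeAlgebra k (UGen θ) := FreeAlgebra.ι k g

/-- The defining relations of the algebra `𝒰(q)`. -/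
inductive URel (q : Fin θ → Fin θ → kˣ) :
    FreeAlgebra k (UGen θ) → FreeAlgebra k (UGen θ) → Prop
  | toral_comm (X Y : UGen θ) (hX : X.IsToral) (hY : Y.IsToral) :
      URel q (Ugen k X * Ugen k Y) (Ugen k Y * Ugen k X)
  | K_Kinv (i : Fin θ) : URel q (Ugen k (.K i) * Ugen k (.Kinv i)) 1
  | Kinv_K (i : Fin θ) : URel q (Ugen k (.Kinv i) * Ugen k (.K i)) 1
  | L_Linv (i : Fin θ) : URel q (Ugen k (.L i) * Ugen k (.Linv i)) 1
  | Linv_L (i : Fin θ) : URel q (Ugen k (.Linv i) * Ugen k (.L i)) 1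
  | K_E (i j : Fin θ) : URel q (Ugen k (.K i) * Ugen k (.E j))
      ((q i j : k) • (Ugen k (.E j) * Ugen k (.K i)))
  | L_E (i j : Fin θ) : URel q (Ugen k (.L i) * Ugen k (.E j))
      ((q j i : k)⁻¹ • (Ugen k (.E j) * Ugen k (.L i)))
  | K_F (i j : Fin θ) : URel q (Ugen k (.K i) * Ugen k (.F j))
      ((q i j : k)⁻¹ • (Ugen k (.F j) * Ugen k (.K i)))
  | L_F (i j : Fin θ) : URel q (Ugen k (.L i) * Ugen k (.F j))
      ((q j i : k) • (Ugen k (.F j) * Ugen k (.L i)))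
  | E_F (i j : Fin θ) : URel q (Ugen k (.E i) * Ugen k (.F j) - Ugen k (.F j) * Ugen k (.E i))
      (if i = j then Ugen k (.K i) - Ugen k (.L i) else 0)

/-- The algebra `𝒰(q)`: the quotient of the free algebra on the generators
`E_i, F_i, K_i, K_i⁻, L_i, L_i⁻` by the defining relations. -/
noncomputable abbrev UqAlgebra (q : Fin θ → Fin θ → kˣ) := RingQuot (URel k q)

variable (q : Fin θ → Fin θ → kˣ)

/-- The generator `E_i` of `𝒰(q)`. -/
noncomputable def UE (i : Fin θ) : UqAlgebra k q := RingQuot.mkAlgHom k (URel k q) (Ugen k (.E i))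
/-- The generator `F_i` of `𝒰(q)`. -/
noncomputable def UF (i : Fin θ) : UqAlgebra k q := RingQuot.mkAlgHom k (URel k q) (Ugen k (.F i))
/-- The generator `K_i` of `𝒰(q)`. -/
noncomputable def UK (i : Fin θ) : UqAlgebra k q := RingQuot.mkAlgHom k (URel k q) (Ugen k (.K i))
/-- The generator `K_i⁻` of `𝒰(q)`. -/
noncomputable def UKinv (i : Fin θ) : UqAlgebra k q :=
  RingQuot.mkAlgHom k (URel k q) (Ugen k (.Kinv i))
/-- The generator `L_i` of `𝒰(q)`. -/
noncomputable def UL (i : Fin θ) : UqAlgebra k q := RingQuot.mkAlgHom k (URel k q) (Ugen k (.L i))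
/-- The generator `L_i⁻` of `𝒰(q)`. -/
noncomputable def ULinv (i : Fin θ) : UqAlgebra k q :=
  RingQuot.mkAlgHom k (URel k q) (Ugen k (.Linv i))


/-- `K_i^n` for `n : ℤ`, with negative exponents interpreted via `K_i⁻`. -/
noncomputable def UKzpow (i : Fin θ) (n : ℤ) : UqAlgebra k q :=
  if 0 ≤ n then UK k q i ^ n.toNat else UKinv k q i ^ (-n).toNat

/-- `L_i^n` for `n : ℤ`, with negative exponents interpreted via `L_i⁻`. -/
noncomputable def ULzpow (i : Fin θ) (n : ℤ) : UqAlgebra k q :=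
  if 0 ≤ n then UL k q i ^ n.toNat else ULinv k q i ^ (-n).toNat

/-- The subalgebra `U⁰(q)` of `𝒰(q)` generated by the `K_i, K_i⁻, L_i, L_i⁻`. -/
noncomputable def Uzero : Subalgebra k (UqAlgebra k q) :=
  Algebra.adjoin k
    {x | ∃ i : Fin θ, x = UK k q i ∨ x = UKinv k q i ∨ x = UL k q i ∨ x = ULinv k q i}

/-! ### Auxiliary development: a Verma-type representation of `𝒰(q)` -/

/-- The index type for the basis of the Verma-type module: words in the `F`'s together
with a pair of exponent vectors for the `K`'s and the `L`'s. -/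
abbrev UW (θ : ℕ) : Type := List (Fin θ) × (Fin θ → ℤ) × (Fin θ → ℤ)

/-- The scalar by which a toral generator acts across a word of `F`'s. -/
noncomputable def tco : UGen θ → List (Fin θ) → k
  | .K j, w => (w.map fun l => ((q j l : k))⁻¹).prod
  | .Kinv j, w => (w.map fun l => (q j l : k)).prod
  | .L j, w => (w.map fun l => (q l j : k)).prod
  | .Linv j, w => (w.map fun l => ((q l j : k))⁻¹).prod
  | _, _ => 1

/-- The `K`-exponent shift of a toral generator. -/
def tb : UGen θ → Fin θ → ℤ
  | .K j => Pi.single j 1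
  | .Kinv j => -Pi.single j 1
  | _ => 0

/-- The `L`-exponent shift of a toral generator. -/
def tc : UGen θ → Fin θ → ℤ
  | .L j => Pi.single j 1
  | .Linv j => -Pi.single j 1
  | _ => 0

/-- The scalar appearing when a toral generator moves past `F i`. -/
noncomputable def tq : UGen θ → Fin θ → k
  | .K j, i => ((q j i : k))⁻¹
  | .Kinv j, i => (q j i : k)
  | .L j, i => (q i j : k)
  | .Linv j, i => ((q i j : k))⁻¹
  | _, _ => 1

/-- The scalar appearing when a toral generator moves past `E j`. -/
noncomputable def tqE : UGen θ → Fin θ → k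
  | .K l, j => (q l j : k)
  | .Kinv l, j => ((q l j : k))⁻¹
  | .L l, j => ((q j l : k))⁻¹
  | .Linv l, j => (q j l : k)
  | _, _ => 1

lemma tco_nil (g : UGen θ) : tco k q g [] = 1 := by cases g <;> rfl

lemma tco_cons (g : UGen θ) (i : Fin θ) (w : List (Fin θ)) :
    tco k q g (i :: w) = tq k q g i * tco k q g w := by
  cases g <;> simp [tco, tq]

lemma tqE_mul_tq (g : UGen θ) (j : Fin θ) : tqE k q g j * tq k q g j = 1 := by
  cases g <;>
    simp [tqE, tq, mul_inv_cancel₀ (Units.ne_zero _), inv_mul_cancel₀ (Units.ne_zero _)]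

/-- The operator by which `F i` acts on the Verma-type module. -/
noncomputable def Fop (i : Fin θ) : (UW θ →₀ k) →ₗ[k] (UW θ →₀ k) :=
  Finsupp.lmapDomain k k fun x => (i :: x.1, x.2)

lemma Fop_single (i : Fin θ) (x : UW θ) (a : k) :
    Fop k i (Finsupp.single x a) = Finsupp.single (i :: x.1, x.2) a := by
  simp [Fop, Finsupp.mapDomain_single]

/-- The value of the action of `E j` on a basis vector. -/
noncomputable def eAct (j : Fin θ) : List (Fin θ) → (Fin θ → ℤ) → (Fin θ → ℤ) → (UW θ →₀ k)
  | [], _, _ => 0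
  | i :: w, b, c =>
    (if i = j then
        Finsupp.single (w, b + Pi.single j 1, c) (tco k q (.K j) w)
          - Finsupp.single (w, b, c + Pi.single j 1) (tco k q (.L j) w)
      else 0) + Fop k i (eAct j w b c)

/-- The value of the action of a generator on a basis vector. -/
noncomputable def act : UGen θ → UW θ → (UW θ →₀ k)
  | .E j, x => eAct k q j x.1 x.2.1 x.2.2
  | .F j, x => Finsupp.single (j :: x.1, x.2) 1
  | g, x => Finsupp.single (x.1, x.2.1 + tb g, x.2.2 + tc g) (tco k q g x.1)

/-- The operator by which a generator acts. -/
noncomputable def op (g : UGen θ) : (UW θ →₀ k) →ₗ[k] (UW θ →₀ k) :=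
  Finsupp.lsum k fun x => LinearMap.toSpanSingleton k _ (act k q g x)

lemma op_single (g : UGen θ) (x : UW θ) (a : k) :
    op k q g (Finsupp.single x a) = a • act k q g x := by
  simp [op, Finsupp.lsum_single, LinearMap.toSpanSingleton_apply]

lemma act_toral (g : UGen θ) (hg : g.IsToral) (x : UW θ) :
    act k q g x = Finsupp.single (x.1, x.2.1 + tb g, x.2.2 + tc g) (tco k q g x.1) := by
  cases g
  · exact hg.elim
  · exact hg.elim
  all_goals rfl

lemma op_toral_single (g : UGen θ) (hg : g.IsToral) (w : List (Fin θ)) (b c : Fin θ → ℤ) (a : k) :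
    op k q g (Finsupp.single (w, b, c) a)
      = (a * tco k q g w) • Finsupp.single ((w, b + tb g, c + tc g) : UW θ) 1 := by
  rw [op_single, act_toral k q g hg]
  simp [Finsupp.smul_single, mul_comm]
lemma op_toral_single' (g : UGen θ) (hg : g.IsToral) (w : List (Fin θ)) (b c : Fin θ → ℤ)
    (a : k) :
    op k q g (Finsupp.single (w, b, c) a)
      = Finsupp.single ((w, b + tb g, c + tc g) : UW θ) (a * tco k q g w) := by
  rw [op_single, act_toral k q g hg]
  simp [Finsupp.smul_single, mul_comm]

lemma op_F_single (i : Fin θ) (w : List (Fin θ)) (b c : Fin θ → ℤ) (a : k) :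
    op k q (.F i) (Finsupp.single (w, b, c) a)
      = Finsupp.single ((i :: w, b, c) : UW θ) a := by
  rw [op_single]
  show a • Finsupp.single ((i :: w, b, c) : UW θ) 1 = _
  simp

lemma op_E_single (j : Fin θ) (w : List (Fin θ)) (b c : Fin θ → ℤ) (a : k) :
    op k q (.E j) (Finsupp.single (w, b, c) a) = a • eAct k q j w b c := by
  rw [op_single]; rfl

lemma Fop_single' (i : Fin θ) (w : List (Fin θ)) (b c : Fin θ → ℤ) (a : k) :
    Fop k i (Finsupp.single (w, b, c) a) = Finsupp.single ((i :: w, b, c) : UW θ) a := by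
  simp [Fop, Finsupp.mapDomain_single]

lemma list_prod_mul_inv (f : Fin θ → kˣ) (w : List (Fin θ)) :
    (w.map fun l => (f l : k)).prod * (w.map fun l => ((f l : k))⁻¹).prod = 1 := by
  induction w with
  | nil => simp
  | cons i w ih =>
    simp only [List.map_cons, List.prod_cons]
    rw [mul_mul_mul_comm, ih, mul_inv_cancel₀ (Units.ne_zero _), one_mul]

lemma op_toral_comm (X Y : UGen θ) (hX : X.IsToral) (hY : Y.IsToral) :
    op k q X * op k q Y = op k q Y * op k q X := by
  apply Finsupp.lhom_ext
  rintro ⟨w, b, c⟩ a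
  rw [Module.End.mul_apply, Module.End.mul_apply, op_toral_single' k q Y hY,
    op_toral_single' k q X hX, op_toral_single' k q X hX, op_toral_single' k q Y hY,
    add_right_comm b, add_right_comm c, mul_right_comm]

lemma op_inv_pair (X Y : UGen θ) (hX : X.IsToral) (hY : Y.IsToral)
    (hb : tb Y + tb X = 0) (hc : tc Y + tc X = 0)
    (hco : ∀ w, tco k q Y w * tco k q X w = 1) :
    op k q X * op k q Y = 1 := by
  apply Finsupp.lhom_ext
  rintro ⟨w, b, c⟩ a
  rw [Module.End.mul_apply, op_toral_single' k q Y hY, op_toral_single' k q X hX,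
    Module.End.one_apply, add_assoc, add_assoc, hb, hc, add_zero, add_zero,
    mul_assoc, hco w, mul_one]

lemma op_toral_F (g : UGen θ) (hg : g.IsToral) (i : Fin θ) :
    op k q g * op k q (.F i) = tq k q g i • (op k q (.F i) * op k q g) := by
  apply Finsupp.lhom_ext
  rintro ⟨w, b, c⟩ a
  rw [Module.End.mul_apply, LinearMap.smul_apply, Module.End.mul_apply,
    op_F_single, op_toral_single' k q g hg, op_toral_single' k q g hg, op_F_single,
    Finsupp.smul_single, smul_eq_mul, tco_cons]
  congr 1
  ring

lemma op_F_eq_Fop (i : Fin θ) : op k q (.F i) = Fop k i := by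
  apply Finsupp.lhom_ext
  rintro ⟨w, b, c⟩ a
  rw [op_F_single, Fop_single']

lemma op_toral_Fop (g : UGen θ) (hg : g.IsToral) (i : Fin θ) (v : UW θ →₀ k) :
    op k q g (Fop k i v) = tq k q g i • Fop k i (op k q g v) := by
  have h : op k q g ∘ₗ Fop k i = tq k q g i • (Fop k i ∘ₗ op k q g) := by
    apply Finsupp.lhom_ext
    rintro ⟨w, b, c⟩ a
    rw [LinearMap.comp_apply, LinearMap.smul_apply, LinearMap.comp_apply,
      Fop_single', op_toral_single' k q g hg, op_toral_single' k q g hg, Fop_single',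
      Finsupp.smul_single, smul_eq_mul, tco_cons]
    congr 1
    ring
  have := congrArg (fun (T : (UW θ →₀ k) →ₗ[k] (UW θ →₀ k)) => T v) h
  simpa using this

lemma op_toral_eAct (g : UGen θ) (hg : g.IsToral) (j : Fin θ) (w : List (Fin θ))
    (b c : Fin θ → ℤ) :
    op k q g (eAct k q j w b c)
      = (tqE k q g j * tco k q g w) • eAct k q j w (b + tb g) (c + tc g) := by
  induction w generalizing b c with
  | nil => simp [eAct]
  | cons i w ih =>
    rw [eAct, eAct, map_add, op_toral_Fop k q g hg, ih, smul_add]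
    congr 1
    · rcases eq_or_ne i j with rfl | hij
      · rw [if_pos rfl, if_pos rfl, map_sub, op_toral_single' k q g hg,
          op_toral_single' k q g hg, smul_sub, Finsupp.smul_single, Finsupp.smul_single,
          smul_eq_mul, smul_eq_mul, tco_cons,
          add_right_comm b (tb g), add_right_comm c (tc g)]
        have h1 : tqE k q g i * (tq k q g i * tco k q g w) = tco k q g w := by
          rw [← mul_assoc, tqE_mul_tq, one_mul]
        congr 2 <;> rw [h1, mul_comm]
      · rw [if_neg hij, if_neg hij, map_zero, smul_zero]
    · rw [map_smul, smul_smul, tco_cons]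
      congr 1
      ring

lemma op_toral_E (g : UGen θ) (hg : g.IsToral) (j : Fin θ) :
    op k q g * op k q (.E j) = tqE k q g j • (op k q (.E j) * op k q g) := by
  apply Finsupp.lhom_ext
  rintro ⟨w, b, c⟩ a
  rw [Module.End.mul_apply, LinearMap.smul_apply, Module.End.mul_apply,
    op_E_single, op_toral_single' k q g hg, op_E_single, map_smul,
    op_toral_eAct k q g hg, smul_smul, smul_smul]
  congr 1
  ring

lemma op_E_F (i j : Fin θ) :
    op k q (.E i) * op k q (.F j) - op k q (.F j) * op k q (.E i)
      = if i = j then op k q (.K i) - op k q (.L i) else 0 := by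
  rcases eq_or_ne i j with rfl | hij
  · rw [if_pos rfl]
    apply Finsupp.lhom_ext
    rintro ⟨w, b, c⟩ a
    rw [LinearMap.sub_apply, LinearMap.sub_apply, Module.End.mul_apply, Module.End.mul_apply,
      op_F_single, op_E_single, op_E_single, op_F_eq_Fop, map_smul, eAct, if_pos rfl,
      op_toral_single' k q (.K i) trivial, op_toral_single' k q (.L i) trivial]
    show a • ((Finsupp.single (w, b + Pi.single i 1, c) (tco k q (.K i) w)
        - Finsupp.single (w, b, c + Pi.single i 1) (tco k q (.L i) w))
        + Fop k i (eAct k q i w b c)) - a • Fop k i (eAct k q i w b c) = _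
    rw [smul_add, add_sub_cancel_right, smul_sub, Finsupp.smul_single, Finsupp.smul_single,
      smul_eq_mul, smul_eq_mul]
    show _ = Finsupp.single ((w, b + tb (UGen.K i), c + tc (UGen.K i)) : UW θ) _
      - Finsupp.single ((w, b + tb (UGen.L i), c + tc (UGen.L i)) : UW θ) _
    simp [tb, tc]
  · rw [if_neg hij]
    apply Finsupp.lhom_ext
    rintro ⟨w, b, c⟩ a
    rw [LinearMap.sub_apply, Module.End.mul_apply, Module.End.mul_apply,
      op_F_single, op_E_single, op_E_single, op_F_eq_Fop, map_smul, eAct,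
      if_neg (Ne.symm hij), zero_add, sub_self, LinearMap.zero_apply]
/-- The action on the free algebra. -/
noncomputable def ρfree : FreeAlgebra k (UGen θ) →ₐ[k] Module.End k (UW θ →₀ k) :=
  FreeAlgebra.lift k (op k q)

lemma ρfree_gen (g : UGen θ) : ρfree k q (Ugen k g) = op k q g :=
  FreeAlgebra.lift_ι_apply _ _

lemma ρfree_rel : ∀ ⦃x y⦄, URel k q x y → ρfree k q x = ρfree k q y := by
  intro x y h
  induction h with
  | toral_comm X Y hX hY =>
    simp only [map_mul, ρfree_gen]
    exact op_toral_comm k q X Y hX hY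
  | K_Kinv i =>
    simp only [map_mul, map_one, ρfree_gen]
    refine op_inv_pair k q (.K i) (.Kinv i) trivial trivial (by simp [tb]) (by simp [tc]) ?_
    intro w
    simpa [tco] using list_prod_mul_inv k (fun l => q i l) w
  | Kinv_K i =>
    simp only [map_mul, map_one, ρfree_gen]
    refine op_inv_pair k q (.Kinv i) (.K i) trivial trivial (by simp [tb]) (by simp [tc]) ?_
    intro w
    rw [mul_comm]
    simpa [tco] using list_prod_mul_inv k (fun l => q i l) w
  | L_Linv i =>
    simp only [map_mul, map_one, ρfree_gen]
    refine op_inv_pair k q (.L i) (.Linv i) trivial trivial (by simp [tb]) (by simp [tc]) ?_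
    intro w
    rw [mul_comm]
    simpa [tco] using list_prod_mul_inv k (fun l => q l i) w
  | Linv_L i =>
    simp only [map_mul, map_one, ρfree_gen]
    refine op_inv_pair k q (.Linv i) (.L i) trivial trivial (by simp [tb]) (by simp [tc]) ?_
    intro w
    simpa [tco] using list_prod_mul_inv k (fun l => q l i) w
  | K_E i j =>
    simp only [map_mul, map_smul, ρfree_gen]
    exact op_toral_E k q (.K i) trivial j
  | L_E i j =>
    simp only [map_mul, map_smul, ρfree_gen]
    exact op_toral_E k q (.L i) trivial j
  | K_F i j =>
    simp only [map_mul, map_smul, ρfree_gen]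
    exact op_toral_F k q (.K i) trivial j
  | L_F i j =>
    simp only [map_mul, map_smul, ρfree_gen]
    exact op_toral_F k q (.L i) trivial j
  | E_F i j =>
    simp only [map_sub, map_mul, ρfree_gen]
    rcases eq_or_ne i j with rfl | hij
    · rw [if_pos rfl, map_sub, ρfree_gen, ρfree_gen, op_E_F, if_pos rfl]
    · simp only [if_neg hij, map_zero]
      rw [op_E_F, if_neg hij]

/-- The Verma-type representation of `𝒰(q)`. -/
noncomputable def ρ : UqAlgebra k q →ₐ[k] Module.End k (UW θ →₀ k) :=
  RingQuot.liftAlgHom k ⟨ρfree k q, ρfree_rel k q⟩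

lemma ρ_UK (i : Fin θ) : ρ k q (UK k q i) = op k q (.K i) := by
  rw [UK, ρ, RingQuot.liftAlgHom_mkAlgHom_apply, ρfree_gen]

lemma ρ_UKinv (i : Fin θ) : ρ k q (UKinv k q i) = op k q (.Kinv i) := by
  rw [UKinv, ρ, RingQuot.liftAlgHom_mkAlgHom_apply, ρfree_gen]

lemma ρ_UL (i : Fin θ) : ρ k q (UL k q i) = op k q (.L i) := by
  rw [UL, ρ, RingQuot.liftAlgHom_mkAlgHom_apply, ρfree_gen]

lemma ρ_ULinv (i : Fin θ) : ρ k q (ULinv k q i) = op k q (.Linv i) := by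
  rw [ULinv, ρ, RingQuot.liftAlgHom_mkAlgHom_apply, ρfree_gen]
lemma UK_mul_UKinv (i : Fin θ) : UK k q i * UKinv k q i = 1 := by
  simpa [UK, UKinv] using RingQuot.mkAlgHom_rel k (URel.K_Kinv (q := q) i)

lemma UKinv_mul_UK (i : Fin θ) : UKinv k q i * UK k q i = 1 := by
  simpa [UKinv, UK] using RingQuot.mkAlgHom_rel k (URel.Kinv_K (q := q) i)

lemma UL_mul_ULinv (i : Fin θ) : UL k q i * ULinv k q i = 1 := by
  simpa [UL, ULinv] using RingQuot.mkAlgHom_rel k (URel.L_Linv (q := q) i)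

lemma ULinv_mul_UL (i : Fin θ) : ULinv k q i * UL k q i = 1 := by
  simpa [ULinv, UL] using RingQuot.mkAlgHom_rel k (URel.Linv_L (q := q) i)

/-- `K_i` as a unit. -/
noncomputable def uK (i : Fin θ) : (UqAlgebra k q)ˣ :=
  ⟨UK k q i, UKinv k q i, UK_mul_UKinv k q i, UKinv_mul_UK k q i⟩

/-- `L_i` as a unit. -/
noncomputable def uL (i : Fin θ) : (UqAlgebra k q)ˣ :=
  ⟨UL k q i, ULinv k q i, UL_mul_ULinv k q i, ULinv_mul_UL k q i⟩

lemma toral_val_comm (X Y : UGen θ) (hX : X.IsToral) (hY : Y.IsToral) :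
    RingQuot.mkAlgHom k (URel k q) (Ugen k X) * RingQuot.mkAlgHom k (URel k q) (Ugen k Y)
      = RingQuot.mkAlgHom k (URel k q) (Ugen k Y) * RingQuot.mkAlgHom k (URel k q) (Ugen k X) := by
  simpa using RingQuot.mkAlgHom_rel k (URel.toral_comm (q := q) X Y hX hY)

/-- The subgroup of units generated by the `K_i` and `L_i`. -/
noncomputable def Hgrp : Subgroup (UqAlgebra k q)ˣ :=
  Subgroup.closure (Set.range (uK k q) ∪ Set.range (uL k q))

lemma Hgrp_comm : ∀ x ∈ Set.range (uK k q) ∪ Set.range (uL k q),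
    ∀ y ∈ Set.range (uK k q) ∪ Set.range (uL k q), x * y = y * x := by
  rintro x (⟨i, rfl⟩ | ⟨i, rfl⟩) y (⟨j, rfl⟩ | ⟨j, rfl⟩) <;>
    exact Units.ext (toral_val_comm k q _ _ trivial trivial)

noncomputable instance : CommGroup (Hgrp k q) :=
  { (Hgrp k q).toGroup with
    mul_comm := (Subgroup.closureCommGroupOfComm (Hgrp_comm k q)).mul_comm }

/-- `K_i` as an element of the subgroup. -/
noncomputable def hK (i : Fin θ) : Hgrp k q :=
  ⟨uK k q i, Subgroup.subset_closure (Or.inl ⟨i, rfl⟩)⟩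

/-- `L_i` as an element of the subgroup. -/
noncomputable def hL (i : Fin θ) : Hgrp k q :=
  ⟨uL k q i, Subgroup.subset_closure (Or.inr ⟨i, rfl⟩)⟩

/-- The value of the monomial map on a group element. -/
noncomputable def φval (x : (Fin θ → ℤ) × (Fin θ → ℤ)) : Hgrp k q :=
  (List.ofFn fun i => hK k q i ^ (x.1 i)).prod * (List.ofFn fun i => hL k q i ^ (x.2 i)).prod

lemma φval_add (x y : (Fin θ → ℤ) × (Fin θ → ℤ)) :
    φval k q (x + y) = φval k q x * φval k q y := by
  simp only [φval, Fin.prod_ofFn, Prod.fst_add, Prod.snd_add, Pi.add_apply, zpow_add,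
    Finset.prod_mul_distrib]
  exact mul_mul_mul_comm _ _ _ _

/-- The coercion of the subgroup into the algebra. -/
noncomputable def ψHom : Hgrp k q →* UqAlgebra k q :=
  (Units.coeHom _).comp (Hgrp k q).subtype

/-- The monomial map as a monoid hom. -/
noncomputable def φmon : Multiplicative ((Fin θ → ℤ) × (Fin θ → ℤ)) →* UqAlgebra k q :=
  (ψHom k q).comp
    (MonoidHom.mk' (fun x => φval k q x.toAdd)
      (fun x y => φval_add k q x.toAdd y.toAdd))

/-- The algebra homomorphism from the group algebra to `𝒰(q)`. -/
noncomputable def fHom : AddMonoidAlgebra k ((Fin θ → ℤ) × (Fin θ → ℤ)) →ₐ[k] UqAlgebra k q :=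
  AddMonoidAlgebra.lift k _ _ (φmon k q)

lemma fHom_single (g : (Fin θ → ℤ) × (Fin θ → ℤ)) (r : k) :
    fHom k q (AddMonoidAlgebra.single g r) = r • ψHom k q (φval k q g) := by
  rw [fHom, AddMonoidAlgebra.lift_single]
  rfl

lemma uK_zpow_val (i : Fin θ) (n : ℤ) :
    ((uK k q i ^ n : (UqAlgebra k q)ˣ) : UqAlgebra k q) = UKzpow k q i n := by
  cases n with
  | ofNat m =>
    rw [Int.ofNat_eq_coe, zpow_natCast, Units.val_pow_eq_pow_val, UKzpow]
    simp [uK]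
  | negSucc m =>
    rw [zpow_negSucc, ← inv_pow, Units.val_pow_eq_pow_val, UKzpow]
    rw [if_neg (not_le.mpr (Int.negSucc_lt_zero m)), Int.neg_negSucc]
    rfl

lemma uL_zpow_val (i : Fin θ) (n : ℤ) :
    ((uL k q i ^ n : (UqAlgebra k q)ˣ) : UqAlgebra k q) = ULzpow k q i n := by
  cases n with
  | ofNat m =>
    rw [Int.ofNat_eq_coe, zpow_natCast, Units.val_pow_eq_pow_val, ULzpow]
    simp [uL]
  | negSucc m =>
    rw [zpow_negSucc, ← inv_pow, Units.val_pow_eq_pow_val, ULzpow]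
    rw [if_neg (not_le.mpr (Int.negSucc_lt_zero m)), Int.neg_negSucc]
    rfl

lemma ψ_φval (a b : Fin θ → ℤ) :
    ψHom k q (φval k q (a, b))
      = (List.ofFn fun i : Fin θ => UKzpow k q i (a i)).prod *
          (List.ofFn fun i : Fin θ => ULzpow k q i (b i)).prod := by
  rw [φval, map_mul, map_list_prod, map_list_prod, List.map_ofFn, List.map_ofFn]
  have h1 : (⇑(ψHom k q) ∘ fun i => hK k q i ^ ((a, b).1 i))
      = fun i : Fin θ => UKzpow k q i (a i) := by
    funext i
    show ψHom k q (hK k q i ^ (a i)) = _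
    rw [ψHom, MonoidHom.comp_apply, map_zpow]
    exact uK_zpow_val k q i (a i)
  have h2 : (⇑(ψHom k q) ∘ fun i => hL k q i ^ ((a, b).2 i))
      = fun i : Fin θ => ULzpow k q i (b i) := by
    funext i
    show ψHom k q (hL k q i ^ (b i)) = _
    rw [ψHom, MonoidHom.comp_apply, map_zpow]
    exact uL_zpow_val k q i (b i)
  rw [h1, h2]

lemma fHom_single_one (a b : Fin θ → ℤ) :
    fHom k q (AddMonoidAlgebra.single (a, b) 1)
      = (List.ofFn fun i : Fin θ => UKzpow k q i (a i)).prod *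
          (List.ofFn fun i : Fin θ => ULzpow k q i (b i)).prod := by
  rw [fHom_single, one_smul, ψ_φval]
lemma pi_single_succ (i : Fin θ) (m : ℕ) :
    (Pi.single i ((m + 1 : ℕ) : ℤ) : Fin θ → ℤ) = Pi.single i (m : ℤ) + Pi.single i 1 := by
  have h : ((m + 1 : ℕ) : ℤ) = (m : ℤ) + 1 := by push_cast; ring
  rw [h, Pi.single_add]

lemma pi_single_negsucc (i : Fin θ) (m : ℕ) :
    (Pi.single i (-((m + 1 : ℕ) : ℤ)) : Fin θ → ℤ)
      = Pi.single i (-(m : ℤ)) + -Pi.single i 1 := by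
  have h : (-((m + 1 : ℕ) : ℤ)) = (-(m : ℤ)) + (-1) := by push_cast; ring
  rw [h, Pi.single_add]
  simp [Pi.single_neg]

lemma op_K_pow (i : Fin θ) (m : ℕ) (b c : Fin θ → ℤ) :
    ((op k q (.K i)) ^ m) (Finsupp.single (([], b, c) : UW θ) 1)
      = Finsupp.single (([], b + Pi.single i (m : ℤ), c) : UW θ) 1 := by
  induction m generalizing b with
  | zero => simp
  | succ m ih =>
    rw [pow_succ', Module.End.mul_apply, ih, op_toral_single' k q (.K i) trivial, tco_nil,
      mul_one, pi_single_succ]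
    simp only [tb, tc, add_zero, add_assoc]

lemma op_Kinv_pow (i : Fin θ) (m : ℕ) (b c : Fin θ → ℤ) :
    ((op k q (.Kinv i)) ^ m) (Finsupp.single (([], b, c) : UW θ) 1)
      = Finsupp.single (([], b + Pi.single i (-(m : ℤ)), c) : UW θ) 1 := by
  induction m generalizing b with
  | zero => simp
  | succ m ih =>
    rw [pow_succ', Module.End.mul_apply, ih, op_toral_single' k q (.Kinv i) trivial, tco_nil,
      mul_one, pi_single_negsucc]
    simp only [tb, tc, add_zero, add_assoc]

lemma op_L_pow (i : Fin θ) (m : ℕ) (b c : Fin θ → ℤ) :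
    ((op k q (.L i)) ^ m) (Finsupp.single (([], b, c) : UW θ) 1)
      = Finsupp.single (([], b, c + Pi.single i (m : ℤ)) : UW θ) 1 := by
  induction m generalizing c with
  | zero => simp
  | succ m ih =>
    rw [pow_succ', Module.End.mul_apply, ih, op_toral_single' k q (.L i) trivial, tco_nil,
      mul_one, pi_single_succ]
    simp only [tb, tc, add_zero, add_assoc]

lemma op_Linv_pow (i : Fin θ) (m : ℕ) (b c : Fin θ → ℤ) :
    ((op k q (.Linv i)) ^ m) (Finsupp.single (([], b, c) : UW θ) 1)
      = Finsupp.single (([], b, c + Pi.single i (-(m : ℤ))) : UW θ) 1 := by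
  induction m generalizing c with
  | zero => simp
  | succ m ih =>
    rw [pow_succ', Module.End.mul_apply, ih, op_toral_single' k q (.Linv i) trivial, tco_nil,
      mul_one, pi_single_negsucc]
    simp only [tb, tc, add_zero, add_assoc]

lemma ρ_UKzpow (i : Fin θ) (n : ℤ) (b c : Fin θ → ℤ) :
    ρ k q (UKzpow k q i n) (Finsupp.single (([], b, c) : UW θ) 1)
      = Finsupp.single (([], b + Pi.single i n, c) : UW θ) 1 := by
  rw [UKzpow]
  split_ifs with h
  · rw [map_pow, ρ_UK, op_K_pow, Int.toNat_of_nonneg h]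
  · rw [map_pow, ρ_UKinv, op_Kinv_pow]
    congr 3
    rw [Int.toNat_of_nonneg (by omega : (0:ℤ) ≤ -n)]
    ring_nf

lemma ρ_ULzpow (i : Fin θ) (n : ℤ) (b c : Fin θ → ℤ) :
    ρ k q (ULzpow k q i n) (Finsupp.single (([], b, c) : UW θ) 1)
      = Finsupp.single (([], b, c + Pi.single i n) : UW θ) 1 := by
  rw [ULzpow]
  split_ifs with h
  · rw [map_pow, ρ_UL, op_L_pow, Int.toNat_of_nonneg h]
  · rw [map_pow, ρ_ULinv, op_Linv_pow]
    congr 4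
    rw [Int.toNat_of_nonneg (by omega : (0:ℤ) ≤ -n)]
    ring_nf

lemma ρ_Kprod (l : List (Fin θ)) (a : Fin θ → ℤ) (b c : Fin θ → ℤ) :
    ρ k q ((l.map fun i => UKzpow k q i (a i)).prod) (Finsupp.single (([], b, c) : UW θ) 1)
      = Finsupp.single (([], b + (l.map fun i => Pi.single i (a i)).sum, c) : UW θ) 1 := by
  induction l generalizing b with
  | nil => simp
  | cons i l ih =>
    rw [List.map_cons, List.prod_cons, map_mul, Module.End.mul_apply, ih, ρ_UKzpow,
      List.map_cons, List.sum_cons]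
    have h : b + (List.map (fun i => Pi.single i (a i)) l).sum + Pi.single i (a i)
        = b + (Pi.single i (a i) + (List.map (fun i => Pi.single i (a i)) l).sum) := by abel
    rw [h]

lemma ρ_Lprod (l : List (Fin θ)) (a : Fin θ → ℤ) (b c : Fin θ → ℤ) :
    ρ k q ((l.map fun i => ULzpow k q i (a i)).prod) (Finsupp.single (([], b, c) : UW θ) 1)
      = Finsupp.single (([], b, c + (l.map fun i => Pi.single i (a i)).sum) : UW θ) 1 := by
  induction l generalizing c with
  | nil => simp
  | cons i l ih =>
    rw [List.map_cons, List.prod_cons, map_mul, Module.End.mul_apply, ih, ρ_ULzpow,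
      List.map_cons, List.sum_cons]
    have h : c + (List.map (fun i => Pi.single i (a i)) l).sum + Pi.single i (a i)
        = c + (Pi.single i (a i) + (List.map (fun i => Pi.single i (a i)) l).sum) := by abel
    rw [h]

lemma map_sum_single_eq (a : Fin θ → ℤ) :
    ((List.finRange θ).map fun i => Pi.single i (a i)).sum = a := by
  have : ((List.finRange θ).map fun i => Pi.single i (a i)).sum
      = (List.ofFn fun i => (Pi.single i (a i) : Fin θ → ℤ)).sum := by
    rw [List.ofFn_eq_map]
  rw [this, List.sum_ofFn, Finset.univ_sum_single]

lemma ρ_fHom_vac (a b : Fin θ → ℤ) :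
    ρ k q (fHom k q (AddMonoidAlgebra.single (a, b) 1))
        (Finsupp.single (([], 0, 0) : UW θ) 1)
      = Finsupp.single (([], a, b) : UW θ) 1 := by
  rw [fHom_single_one, map_mul, Module.End.mul_apply, List.ofFn_eq_map, List.ofFn_eq_map,
    ρ_Lprod, ρ_Kprod, map_sum_single_eq, map_sum_single_eq, zero_add, zero_add]

lemma key_vac (x : AddMonoidAlgebra k ((Fin θ → ℤ) × (Fin θ → ℤ))) :
    ρ k q (fHom k q x) (Finsupp.single (([], 0, 0) : UW θ) 1)
      = Finsupp.mapDomain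
          (fun g : (Fin θ → ℤ) × (Fin θ → ℤ) => (([] : List (Fin θ)), g.1, g.2)) x.coeff := by
  induction x using AddMonoidAlgebra.induction_linear with
  | zero => simp
  | add f g hf hg =>
    rw [map_add, map_add, LinearMap.add_apply, hf, hg, AddMonoidAlgebra.coeff_add, Finsupp.mapDomain_add]
  | single g r =>
    obtain ⟨ga, gb⟩ := g
    have h1 : (AddMonoidAlgebra.single ((ga, gb)) r : AddMonoidAlgebra k ((Fin θ → ℤ) × (Fin θ → ℤ)))
        = r • AddMonoidAlgebra.single (ga, gb) 1 := by
      rw [AddMonoidAlgebra.smul_single, smul_eq_mul, mul_one]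
    rw [AddMonoidAlgebra.coeff_single, Finsupp.mapDomain_single, h1, map_smul, map_smul, LinearMap.smul_apply, ρ_fHom_vac,
      Finsupp.smul_single, smul_eq_mul, mul_one]

lemma fHom_injective : Function.Injective (fHom k q) := by
  intro x y hxy
  have h2 := key_vac k q x
  rw [hxy, key_vac k q y] at h2
  exact AddMonoidAlgebra.coeff_injective (Finsupp.mapDomain_injective
    (fun g g' h => by simpa [Prod.ext_iff] using h) h2.symm)
lemma UK_mem (i : Fin θ) : UK k q i ∈ Uzero k q := by
  rw [Uzero]
  exact Algebra.subset_adjoin ⟨i, Or.inl rfl⟩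

lemma UKinv_mem (i : Fin θ) : UKinv k q i ∈ Uzero k q := by
  rw [Uzero]
  exact Algebra.subset_adjoin ⟨i, Or.inr (Or.inl rfl)⟩

lemma UL_mem (i : Fin θ) : UL k q i ∈ Uzero k q := by
  rw [Uzero]
  exact Algebra.subset_adjoin ⟨i, Or.inr (Or.inr (Or.inl rfl))⟩

lemma ULinv_mem (i : Fin θ) : ULinv k q i ∈ Uzero k q := by
  rw [Uzero]
  exact Algebra.subset_adjoin ⟨i, Or.inr (Or.inr (Or.inr rfl))⟩

lemma UKzpow_mem (i : Fin θ) (n : ℤ) : UKzpow k q i n ∈ Uzero k q := by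
  rw [UKzpow]
  split_ifs
  · exact pow_mem (UK_mem k q i) _
  · exact pow_mem (UKinv_mem k q i) _

lemma ULzpow_mem (i : Fin θ) (n : ℤ) : ULzpow k q i n ∈ Uzero k q := by
  rw [ULzpow]
  split_ifs
  · exact pow_mem (UL_mem k q i) _
  · exact pow_mem (ULinv_mem k q i) _

lemma range_le_Uzero : (fHom k q).range ≤ Uzero k q := by
  have hmem : ∀ y, fHom k q y ∈ Uzero k q := by
    intro y
    induction y using AddMonoidAlgebra.induction_linear with
    | zero => rw [map_zero]; exact zero_mem _
    | add f g hf hg => rw [map_add]; exact add_mem hf hg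
    | single g r =>
      obtain ⟨a, b⟩ := g
      have h1 : (AddMonoidAlgebra.single ((a, b)) r : AddMonoidAlgebra k ((Fin θ → ℤ) × (Fin θ → ℤ)))
          = r • AddMonoidAlgebra.single (a, b) 1 := by
        rw [AddMonoidAlgebra.smul_single, smul_eq_mul, mul_one]
      rw [h1, map_smul]
      refine Subalgebra.smul_mem _ ?_ r
      rw [fHom_single_one]
      refine mul_mem (list_prod_mem ?_) (list_prod_mem ?_)
      · intro x hx
        obtain ⟨i, rfl⟩ := List.mem_ofFn.mp hx
        exact UKzpow_mem k q i (a i)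
      · intro x hx
        obtain ⟨i, rfl⟩ := List.mem_ofFn.mp hx
        exact ULzpow_mem k q i (b i)
  intro x hx
  obtain ⟨y, rfl⟩ := (AlgHom.mem_range (fHom k q)).mp hx
  exact hmem y

lemma fHom_K (i : Fin θ) (n : ℤ) :
    fHom k q (AddMonoidAlgebra.single (Pi.single i n, 0) 1) = UKzpow k q i n := by
  rw [fHom_single, one_smul]
  have h2 : φval k q (Pi.single i n, 0) = hK k q i ^ n := by
    rw [φval]
    simp only [Fin.prod_ofFn, Pi.zero_apply, zpow_zero, Finset.prod_const_one, mul_one]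
    have hfun : ∀ j ∈ Finset.univ, hK k q j ^ ((Pi.single i n : Fin θ → ℤ) j)
        = if j = i then hK k q j ^ n else 1 := by
      intro j _
      rcases eq_or_ne j i with rfl | hj
      · simp
      · simp [Pi.single_eq_of_ne hj, hj]
    rw [Finset.prod_congr rfl hfun,
      Finset.prod_ite_eq' Finset.univ i (fun j => hK k q j ^ n), if_pos (Finset.mem_univ i)]
  rw [h2, ψHom, MonoidHom.comp_apply, map_zpow]
  exact uK_zpow_val k q i n

lemma fHom_L (i : Fin θ) (n : ℤ) :
    fHom k q (AddMonoidAlgebra.single (0, Pi.single i n) 1) = ULzpow k q i n := by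
  rw [fHom_single, one_smul]
  have h2 : φval k q (0, Pi.single i n) = hL k q i ^ n := by
    rw [φval]
    simp only [Fin.prod_ofFn, Pi.zero_apply, zpow_zero, Finset.prod_const_one, one_mul]
    have hfun : ∀ j ∈ Finset.univ, hL k q j ^ ((Pi.single i n : Fin θ → ℤ) j)
        = if j = i then hL k q j ^ n else 1 := by
      intro j _
      rcases eq_or_ne j i with rfl | hj
      · simp
      · simp [Pi.single_eq_of_ne hj, hj]
    rw [Finset.prod_congr rfl hfun,
      Finset.prod_ite_eq' Finset.univ i (fun j => hL k q j ^ n), if_pos (Finset.mem_univ i)]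
  rw [h2, ψHom, MonoidHom.comp_apply, map_zpow]
  exact uL_zpow_val k q i n

lemma Uzero_le_range : Uzero k q ≤ (fHom k q).range := by
  rw [Uzero]
  apply Algebra.adjoin_le
  rintro x ⟨i, h | h | h | h⟩ <;> subst h
  · refine (AlgHom.mem_range (fHom k q)).mpr ⟨AddMonoidAlgebra.single (Pi.single i 1, 0) 1, ?_⟩
    rw [fHom_K, UKzpow, if_pos (by norm_num)]
    norm_num
  · refine (AlgHom.mem_range (fHom k q)).mpr
      ⟨AddMonoidAlgebra.single (Pi.single i (-1), 0) 1, ?_⟩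
    rw [fHom_K, UKzpow, if_neg (by norm_num)]
    norm_num
  · refine (AlgHom.mem_range (fHom k q)).mpr ⟨AddMonoidAlgebra.single (0, Pi.single i 1) 1, ?_⟩
    rw [fHom_L, ULzpow, if_pos (by norm_num)]
    norm_num
  · refine (AlgHom.mem_range (fHom k q)).mpr
      ⟨AddMonoidAlgebra.single (0, Pi.single i (-1)) 1, ?_⟩
    rw [fHom_L, ULzpow, if_neg (by norm_num)]
    norm_num
/-- The algebra homomorphism from the group algebra `k[ℤ^θ × ℤ^θ]` to `𝒰(q)` sending the
basis element of the group element `(a,b)` to `K_1^{a_1}⋯K_θ^{a_θ}·L_1^{b_1}⋯L_θ^{b_θ}`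
is injective with image `U⁰(q)`; in particular `U⁰(q)` is isomorphic to the group algebra
of `ℤ^{2θ}`. -/
theorem UqAlgebra_Uzero_group_algebra :
    ∃ f : AddMonoidAlgebra k ((Fin θ → ℤ) × (Fin θ → ℤ)) →ₐ[k] UqAlgebra k q,
      (∀ a b : Fin θ → ℤ,
        f (AddMonoidAlgebra.single (a, b) 1) =
          (List.ofFn fun i : Fin θ => UKzpow k q i (a i)).prod *
            (List.ofFn fun i : Fin θ => ULzpow k q i (b i)).prod) ∧
      Function.Injective f ∧
      f.range = Uzero k q :=
  ⟨fHom k q, fHom_single_one k q, fHom_injective k q,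
    le_antisymm (range_le_Uzero k q) (Uzero_le_range k q)⟩
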